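/- Let k be a field, d a positive integer, and q an integer with q ≥ d. Write q = k₀·d + a with 0 ≤ a < d. Then the k[T]-module M = k[x]/(x^q), with T acting as multiplication by x^d, decomposes as M ≅ (k[T]/(T^{k₀+1}))^a ⊕ (k[T]/(T^{k₀}))^{d−a}. -/

import Mathlib

open Polynomial

noncomputable def qBasis (k : Type*) [Field k] (n : ℕ) :
    Module.Basis (Fin n) k (Polynomial k ⧸ Ideal.span {(X : Polynomial k) ^ n}) :=
  ((AdjoinRoot.powerBasis (f := (X : Polynomial k) ^ n)
      (pow_ne_zero n X_ne_zero)).basis.reindex (finCongr (by simp)))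

lemma qBasis_apply (k : Type*) [Field k] (n : ℕ) (i : Fin n) :
    qBasis k n i = Ideal.Quotient.mk _ (X : Polynomial k) ^ (i : ℕ) := by
  simp only [qBasis]
  erw [Module.Basis.reindex_apply, PowerBasis.basis_eq_pow, AdjoinRoot.powerBasis_gen]
  rfl

lemma mul_pi_single {J : Type*} [DecidableEq J] {M : Type*} [MulZeroClass M]
    (c : M) (j : J) (v : M) :
    (fun i => c * (Pi.single j v : J → M) i) = (Pi.single j (c * v) : J → M) := by
  funext i
  rcases eq_or_ne i j with rfl | h
  · simp
  · simp [Pi.single_eq_of_ne h]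

lemma mkX_pow_eq_zero (k : Type*) [Field k] (n m : ℕ) (h : n ≤ m) :
    (Ideal.Quotient.mk (Ideal.span {(X : Polynomial k) ^ n}) X) ^ m = 0 := by
  rw [← map_pow, Ideal.Quotient.eq_zero_iff_mem, Ideal.mem_span_singleton]
  exact pow_dvd_pow X h

set_option maxHeartbeats 1000000 in
theorem stmt2 (k : Type*) [Field k] (d q : ℕ) (hd : 0 < d) (hq : d ≤ q) :
    ∃ (e : (Polynomial k ⧸ Ideal.span {(X : Polynomial k) ^ q}) ≃ₗ[k]
        ((Fin (q % d) → Polynomial k ⧸ Ideal.span {(X : Polynomial k) ^ (q / d + 1)}) ×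
          (Fin (d - q % d) → Polynomial k ⧸ Ideal.span {(X : Polynomial k) ^ (q / d)}))),
      ∀ m, e (Ideal.Quotient.mk _ ((X : Polynomial k) ^ d) * m) =
        (fun i => Ideal.Quotient.mk _ (X : Polynomial k) * (e m).1 i,
         fun i => Ideal.Quotient.mk _ (X : Polynomial k) * (e m).2 i) := by
  set a := q % d with ha
  set k0 := q / d with hk0
  have hdm : d * k0 + a = q := by rw [ha, hk0]; exact Nat.div_add_mod q d
  have hal : a < d := Nat.mod_lt q hd
  have hk1 : 1 ≤ k0 := (Nat.one_le_div_iff hd).2 hq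
  -- bases
  let b1 := qBasis k q
  let b2 := (Pi.basis (fun _ : Fin a => qBasis k (k0 + 1))).prod
      (Pi.basis (fun _ : Fin (d - a) => qBasis k k0))
  -- index bijection
  let τ : ((Σ _ : Fin a, Fin (k0 + 1)) ⊕ (Σ _ : Fin (d - a), Fin k0)) → Fin q :=
    Sum.elim
      (fun p => ⟨p.1.val + d * p.2.val, by
        have h2 : d * p.2.val ≤ d * k0 := Nat.mul_le_mul_left d (Nat.lt_succ_iff.mp p.2.2)
        have := p.1.2; omega⟩)
      (fun p => ⟨(a + p.1.val) + d * p.2.val, by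
        have h2 : d * (p.2.val + 1) ≤ d * k0 := Nat.mul_le_mul_left d p.2.2
        rw [Nat.mul_succ] at h2
        have := p.1.2; omega⟩)
  have key : ∀ j1 i1 j2 i2 : ℕ, j1 < d → j2 < d → j1 + d * i1 = j2 + d * i2 →
      j1 = j2 ∧ i1 = i2 := by
    intro j1 i1 j2 i2 h1 h2 h
    have hm : j1 = j2 := by
      have := congrArg (· % d) h
      simpa [Nat.add_mul_mod_self_left, Nat.mod_eq_of_lt h1, Nat.mod_eq_of_lt h2] using this
    refine ⟨hm, ?_⟩
    subst hm
    have : d * i1 = d * i2 := by omega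
    exact Nat.eq_of_mul_eq_mul_left hd this
  have hinj : Function.Injective τ := by
    rintro (⟨j1, i1⟩ | ⟨j1, i1⟩) (⟨j2, i2⟩ | ⟨j2, i2⟩) h <;>
      simp only [τ, Sum.elim_inl, Sum.elim_inr, Fin.mk.injEq] at h
    · obtain ⟨hj, hi⟩ := key j1 i1 j2 i2 (j1.2.trans hal) (j2.2.trans hal) h
      have h1 : j1 = j2 := Fin.ext hj
      have h2 : i1 = i2 := Fin.ext hi
      subst h1; subst h2; rfl
    · obtain ⟨hj, -⟩ := key j1 i1 (a + j2) i2 (j1.2.trans hal) (by omega) h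
      have := j1.2; omega
    · obtain ⟨hj, -⟩ := key (a + j1) i1 j2 i2 (by omega) (j2.2.trans hal) h
      have := j2.2; omega
    · obtain ⟨hj, hi⟩ := key (a + j1) i1 (a + j2) i2 (by omega) (by omega) h
      have h1 : j1 = j2 := Fin.ext (by omega)
      have h2 : i1 = i2 := Fin.ext hi
      subst h1; subst h2; rfl
  have hcard : Fintype.card ((Σ _ : Fin a, Fin (k0 + 1)) ⊕ (Σ _ : Fin (d - a), Fin k0)) =
      Fintype.card (Fin q) := by
    simp only [Fintype.card_sum, Fintype.card_sigma, Finset.sum_const, Finset.card_univ,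
      Fintype.card_fin, smul_eq_mul]
    calc a * (k0 + 1) + (d - a) * k0 = a * k0 + (d - a) * k0 + a := by ring
      _ = (a + (d - a)) * k0 + a := by rw [add_mul]
      _ = d * k0 + a := by rw [Nat.add_sub_cancel' hal.le]
      _ = q := hdm
  have hbij : Function.Bijective τ :=
    (Fintype.bijective_iff_injective_and_card τ).2 ⟨hinj, by simpa using hcard⟩
  let σ := Equiv.ofBijective τ hbij
  let e := b1.equiv b2 σ.symm
  have he : ∀ x, e (b1 (τ x)) = b2 x := fun x => by
    show e (b1 (σ x)) = b2 x
    rw [Module.Basis.equiv_apply, Equiv.symm_apply_apply]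
  refine ⟨e, ?_⟩
  let cA : Polynomial k ⧸ Ideal.span {(X : Polynomial k) ^ (k0 + 1)} := Ideal.Quotient.mk _ X
  let cB : Polynomial k ⧸ Ideal.span {(X : Polynomial k) ^ k0} := Ideal.Quotient.mk _ X
  let F : ((Fin a → Polynomial k ⧸ Ideal.span {(X : Polynomial k) ^ (k0 + 1)}) ×
        (Fin (d - a) → Polynomial k ⧸ Ideal.span {(X : Polynomial k) ^ k0})) →ₗ[k]
      ((Fin a → Polynomial k ⧸ Ideal.span {(X : Polynomial k) ^ (k0 + 1)}) ×
        (Fin (d - a) → Polynomial k ⧸ Ideal.span {(X : Polynomial k) ^ k0})) :=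
    { toFun := fun m => (fun i => cA * m.1 i, fun i => cB * m.2 i)
      map_add' := by intro m n; refine Prod.ext ?_ ?_ <;> funext i <;> simp [mul_add]
      map_smul' := by
        intro r m; refine Prod.ext ?_ ?_ <;> funext i <;> simp [mul_smul_comm] }
  let G := LinearMap.mulLeft k
    (Ideal.Quotient.mk (Ideal.span {(X : Polynomial k) ^ q}) (X ^ d))
  have hb1 : ∀ m : Fin q, b1 m = Ideal.Quotient.mk _ (X : Polynomial k) ^ (m : ℕ) :=
    qBasis_apply k q
  have hb2l : ∀ (j : Fin a) (i : Fin (k0 + 1)),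
      b2 (Sum.inl ⟨j, i⟩) = (Pi.single j (cA ^ (i : ℕ)), 0) := by
    intro j i
    refine Prod.ext ?_ ?_
    · simp only [b2]
      rw [Module.Basis.prod_apply_inl_fst, Pi.basis_apply, qBasis_apply]
    · simp only [b2]
      rw [Module.Basis.prod_apply_inl_snd]
  have hb2r : ∀ (j : Fin (d - a)) (i : Fin k0),
      b2 (Sum.inr ⟨j, i⟩) = (0, Pi.single j (cB ^ (i : ℕ))) := by
    intro j i
    refine Prod.ext ?_ ?_
    · simp only [b2]
      rw [Module.Basis.prod_apply_inr_fst]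
    · simp only [b2]
      rw [Module.Basis.prod_apply_inr_snd, Pi.basis_apply, qBasis_apply]
  have hmul : ∀ n : ℕ,
      (Ideal.Quotient.mk (Ideal.span {(X : Polynomial k) ^ q}) (X ^ d)) *
        (Ideal.Quotient.mk _ (X : Polynomial k)) ^ n =
      (Ideal.Quotient.mk _ (X : Polynomial k)) ^ (n + d) := by
    intro n; rw [map_pow, ← pow_add, add_comm]
  have main : e.toLinearMap ∘ₗ G = F ∘ₗ e.toLinearMap := by
    apply b1.ext
    intro n
    obtain ⟨x, rfl⟩ := hbij.2 n
    simp only [LinearMap.comp_apply, LinearEquiv.coe_coe]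
    rw [he]
    rcases x with ⟨j, i⟩ | ⟨j, i⟩
    · rw [hb2l]
      have hG : G (b1 (τ (Sum.inl ⟨j, i⟩))) =
          (Ideal.Quotient.mk _ (X : Polynomial k)) ^ ((j : ℕ) + d * i + d) := by
        simp only [G, LinearMap.mulLeft_apply]
        rw [hb1, hmul]
        rfl
      have hF : F (Pi.single j (cA ^ (i : ℕ)), 0) = (Pi.single j (cA ^ ((i : ℕ) + 1)), 0) := by
        refine Prod.ext ?_ ?_
        · show (fun i' => cA * (Pi.single j (cA ^ (i : ℕ)) : Fin a → _) i') = _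
          rw [mul_pi_single, ← pow_succ']
        · funext i'; simp [F]
      rw [hF]
      rcases Nat.lt_or_ge (i : ℕ) k0 with hi | hi
      · have hx' : ((j : ℕ) + d * i + d) = (τ (Sum.inl ⟨j, ⟨(i : ℕ) + 1, by omega⟩⟩) : ℕ) := by
          show _ = (j : ℕ) + d * ((i : ℕ) + 1)
          rw [Nat.mul_succ]; ring
        rw [hG, hx', ← hb1, he, hb2l]
      · have hiv : (i : ℕ) = k0 := by omega
        have h0 : G (b1 (τ (Sum.inl ⟨j, i⟩))) = 0 := by
          rw [hG, hiv]
          exact mkX_pow_eq_zero k q _ (by have := j.2; omega)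
        have hz : cA ^ ((i : ℕ) + 1) = 0 := by
          rw [hiv]; exact mkX_pow_eq_zero k (k0 + 1) (k0 + 1) le_rfl
        rw [h0, LinearEquiv.map_zero, hz, Pi.single_zero]
        rfl
    · rw [hb2r]
      have hG : G (b1 (τ (Sum.inr ⟨j, i⟩))) =
          (Ideal.Quotient.mk _ (X : Polynomial k)) ^ ((a + (j : ℕ)) + d * i + d) := by
        simp only [G, LinearMap.mulLeft_apply]
        rw [hb1, hmul]
        rfl
      have hF : F (0, Pi.single j (cB ^ (i : ℕ))) = (0, Pi.single j (cB ^ ((i : ℕ) + 1))) := by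
        refine Prod.ext ?_ ?_
        · funext i'; simp [F]
        · show (fun i' => cB * (Pi.single j (cB ^ (i : ℕ)) : Fin (d - a) → _) i') = _
          rw [mul_pi_single, ← pow_succ']
      rw [hF]
      rcases Nat.lt_or_ge ((i : ℕ) + 1) k0 with hi | hi
      · have hx' : ((a + (j : ℕ)) + d * i + d) = (τ (Sum.inr ⟨j, ⟨(i : ℕ) + 1, hi⟩⟩) : ℕ) := by
          show _ = a + (j : ℕ) + d * ((i : ℕ) + 1)
          rw [Nat.mul_succ]; ring
        rw [hG, hx', ← hb1, he, hb2r]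
      · have hiv : (i : ℕ) + 1 = k0 := by omega
        have h0 : G (b1 (τ (Sum.inr ⟨j, i⟩))) = 0 := by
          rw [hG]
          refine mkX_pow_eq_zero k q _ ?_
          have h2 : d * ((i : ℕ) + 1) = d * k0 := by rw [hiv]
          rw [Nat.mul_succ] at h2
          have := j.2; omega
        have hz : cB ^ ((i : ℕ) + 1) = 0 := by
          rw [hiv]; exact mkX_pow_eq_zero k k0 k0 le_rfl
        rw [h0, LinearEquiv.map_zero, hz, Pi.single_zero]
        rfl
  intro m
  have hm := LinearMap.congr_fun main m
  simpa only [LinearMap.comp_apply, LinearEquiv.coe_coe, G, F, cA, cB,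
    LinearMap.mulLeft_apply, LinearMap.coe_mk, AddHom.coe_mk] using hm
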